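/- Let λ be a Borel probability measure on the compact space Γ(Ω,φ) that is ergodic with respect to the continuous map P ↦ V∘P, let ω ∈ Ω, and let μ be a Borel probability measure on Ω such that ∫ x dμ = ∫_{Γ(Ω,φ)} ⟨x, Pδ(ω)⟩ dλ(P) for every x ∈ C(Ω,ℝ). Then μ is φ-invariant and φ-ergodic. -/

import Mathlib

open MeasureTheory Filter Topology

/-- The pairing `⟨f, μ⟩ = ∫ f dμ` of a function with a finite signed Borel measure,
defined via the Jordan decomposition of the signed measure. -/
noncomputable def spair {Ω : Type*} [MeasurableSpace Ω] (f : Ω → ℝ) (μ : SignedMeasure Ω) : ℝ :=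
  (∫ ω, f ω ∂μ.toJordanDecomposition.posPart) - (∫ ω, f ω ∂μ.toJordanDecomposition.negPart)

/-- The weak* topology on the space `X*` of finite signed Borel measures, i.e. the topology
of convergence of the pairings with all continuous functions `x ∈ C(Ω, ℝ)`. With this topology
on the codomain, the product topology on `SignedMeasure Ω → SignedMeasure Ω` is precisely the
weak* operator topology (pointwise convergence with `X*` in its weak* topology). -/
noncomputable instance weakStarTopology {Ω : Type*} [TopologicalSpace Ω] [MeasurableSpace Ω] :
    TopologicalSpace (SignedMeasure Ω) :=
  TopologicalSpace.induced (fun μ => fun x : C(Ω, ℝ) => spair (⇑x) μ) inferInstance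

/-- The operator `V : X* → X*`, pushforward by `φ`: `(Vμ)(e) = μ(φ⁻¹ e)`. -/
noncomputable def Vop {Ω : Type*} [MeasurableSpace Ω] (φ : Ω → Ω) :
    SignedMeasure Ω → SignedMeasure Ω :=
  fun μ => μ.map φ

/-- The Dirac measure at `ω`, as a signed measure. -/
noncomputable def diracSM {Ω : Type*} [MeasurableSpace Ω] (ω : Ω) : SignedMeasure Ω :=
  (Measure.dirac ω).toSignedMeasure

/-- `Γ(Ω,φ)`: the closure of `{Vⁿ : n ≥ 0}` in the weak* operator topology. -/
def GammaSG {Ω : Type*} [TopologicalSpace Ω] [MeasurableSpace Ω] (φ : Ω → Ω) :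
    Set (SignedMeasure Ω → SignedMeasure Ω) :=
  closure (Set.range fun n : ℕ => (Vop φ)^[n])

/-- `G(Ω,φ)`: the closure of the convex hull of `{Vⁿ : n ≥ 0}` in the weak* operator topology. -/
def GSG {Ω : Type*} [TopologicalSpace Ω] [MeasurableSpace Ω] (φ : Ω → Ω) :
    Set (SignedMeasure Ω → SignedMeasure Ω) :=
  closure (convexHull ℝ (Set.range fun n : ℕ => (Vop φ)^[n]))

/-- The kernel `L = {Q ∈ G(Ω,φ) : V ∘ Q = Q}` of the semigroup `G(Ω,φ)`. -/
def Lker {Ω : Type*} [TopologicalSpace Ω] [MeasurableSpace Ω] (φ : Ω → Ω) :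
    Set (SignedMeasure Ω → SignedMeasure Ω) :=
  {Q ∈ GSG φ | Vop φ ∘ Q = Q}

/-- The Ellis enveloping semigroup `E(Ω,φ)`: the closure of the iterates `{φⁿ : n ≥ 0}`
in the product topology (pointwise convergence) on `Ω → Ω`. -/
def EllisE {Ω : Type*} [TopologicalSpace Ω] (φ : Ω → Ω) : Set (Ω → Ω) :=
  closure (Set.range fun n : ℕ => φ^[n])

/-- `E_b(Ω,φ)`: the smallest set of self-maps of `Ω` containing the iterates `{φⁿ : n ≥ 0}`
and sequentially closed under pointwise convergence. -/
inductive Eb {Ω : Type*} [TopologicalSpace Ω] (φ : Ω → Ω) : (Ω → Ω) → Prop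
  | iterate (n : ℕ) : Eb φ φ^[n]
  | lim (p : ℕ → Ω → Ω) (q : Ω → Ω) (hp : ∀ k, Eb φ (p k))
      (hq : ∀ ω, Tendsto (fun k => p k ω) atTop (𝓝 (q ω))) : Eb φ q

/-- `E₁(Ω,φ)`: the set of pointwise limits of sequences of iterates `φ^{n_k}`. -/
def E1SG {Ω : Type*} [TopologicalSpace Ω] (φ : Ω → Ω) : Set (Ω → Ω) :=
  {p | ∃ n : ℕ → ℕ, ∀ ω, Tendsto (fun k => φ^[n k] ω) atTop (𝓝 (p ω))}

/-- An operator `P ∈ Γ(Ω,φ)` with `p = πP` is regular if `p` is Borel measurable and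
`(Pμ)(e) = μ(p⁻¹ e)` for every Borel probability measure `μ` and Borel set `e`. -/
def RegularOperator {Ω : Type*} [TopologicalSpace Ω] [MeasurableSpace Ω]
    (P : SignedMeasure Ω → SignedMeasure Ω) (p : Ω → Ω) : Prop :=
  Measurable p ∧ ∀ (μ : Measure Ω) [IsProbabilityMeasure μ],
    ∀ e : Set Ω, MeasurableSet e → P μ.toSignedMeasure e = (μ (p ⁻¹' e)).toReal

/-- A minimal set of the semicascade `(Ω,φ)`: a nonempty closed `φ`-invariant set containing
no proper nonempty closed `φ`-invariant subset. -/
def IsMinimalSet {Ω : Type*} [TopologicalSpace Ω] (φ : Ω → Ω) (m : Set Ω) : Prop :=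
  m.Nonempty ∧ IsClosed m ∧ Set.MapsTo φ m m ∧
    ∀ m' ⊆ m, m'.Nonempty → IsClosed m' → Set.MapsTo φ m' m' → m' = m

/-- The orbit closure of a point `ω`: the closure of the trajectory `{φⁿ ω : n ≥ 0}`. -/
def orbitClosure {Ω : Type*} [TopologicalSpace Ω] (φ : Ω → Ω) (ω : Ω) : Set Ω :=
  closure (Set.range fun n : ℕ => φ^[n] ω)

/-- A `φ`-ergodic measure: a `φ`-invariant Borel probability measure `μ` such that
`μ(e) ∈ {0,1}` for every Borel set `e` with `φ⁻¹ e = e`. -/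
def IsErgodicMeasure {Ω : Type*} [MeasurableSpace Ω] (φ : Ω → Ω) (μ : Measure Ω) : Prop :=
  IsProbabilityMeasure μ ∧ (∀ e : Set Ω, MeasurableSet e → μ (φ ⁻¹' e) = μ e) ∧
    (∀ e : Set Ω, MeasurableSet e → φ ⁻¹' e = e → μ e = 0 ∨ μ e = 1)

/-- The support of a Borel measure: the smallest closed set of full measure
(the intersection of all closed sets of full measure). -/
def msupp {Ω : Type*} [TopologicalSpace Ω] [MeasurableSpace Ω] (μ : Measure Ω) : Set Ω :=
  ⋂₀ {s : Set Ω | IsClosed s ∧ μ sᶜ = 0}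

/-- The semicascade `(Ω,φ)` is tame: for every continuous `x` and every strictly increasing
sequence `n(1) < n(2) < ⋯`, the infimum over finitely supported real coefficients `a` with
`Σ|aₖ| = 1` of the sup-norms `‖Σₖ aₖ · (x ∘ φ^{n(k)})‖` is `0`. -/
def Tame {Ω : Type*} [TopologicalSpace Ω] [CompactSpace Ω] (φ : Ω → Ω)
    (hφ : Continuous φ) : Prop :=
  ∀ (x : C(Ω, ℝ)) (n : ℕ → ℕ), StrictMono n →
    sInf {r : ℝ | ∃ a : ℕ →₀ ℝ, (∑ k ∈ a.support, |a k|) = 1 ∧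
      r = ‖∑ k ∈ a.support, a k • x.comp ⟨φ^[n k], hφ.iterate (n k)⟩‖} = 0

/-- Points `a, b` are proximal: `inf_{n ≥ 0} d(φⁿ a, φⁿ b) = 0`. -/
def Proximal {Ω : Type*} [PseudoMetricSpace Ω] (φ : Ω → Ω) (a b : Ω) : Prop :=
  (⨅ n : ℕ, dist (φ^[n] a) (φ^[n] b)) = 0

/-- The Borel σ-algebra on the space of operators `X* → X*` with the weak* operator topology. -/
noncomputable instance funBorel {Ω : Type*} [TopologicalSpace Ω] [MeasurableSpace Ω] :
    MeasurableSpace (SignedMeasure Ω → SignedMeasure Ω) :=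
  borel _

variable {Ω : Type*} [TopologicalSpace Ω] [CompactSpace Ω] [TopologicalSpace.MetrizableSpace Ω]
  [Nonempty Ω] [MeasurableSpace Ω] [BorelSpace Ω]

section AuxLemmas
set_option linter.unusedSectionVars false

/-- Continuous functions are integrable with respect to finite measures on a compact space. -/
lemma aux_integrable (x : C(Ω, ℝ)) (m : Measure Ω) [IsFiniteMeasure m] :
    Integrable (fun z => x z) m := by
  have h := (x.continuous.continuousOn (s := Set.univ)).integrableOn_compact
    (μ := m) isCompact_univ
  rwa [integrableOn_univ] at h

/-- `spair` of a difference of two finite measures. -/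
lemma aux_spair_sub (x : C(Ω, ℝ)) {a b : Measure Ω} [IsFiniteMeasure a] [IsFiniteMeasure b]
    {ν : SignedMeasure Ω} (hν : ν = a.toSignedMeasure - b.toSignedMeasure) :
    spair (⇑x) ν = (∫ z, x z ∂a) - ∫ z, x z ∂b := by
  set p := ν.toJordanDecomposition.posPart with hp
  set n := ν.toJordanDecomposition.negPart with hn
  have hpn : p.toSignedMeasure - n.toSignedMeasure = ν := by
    have := ν.toSignedMeasure_toJordanDecomposition
    rwa [JordanDecomposition.toSignedMeasure] at this
  have key : p + b = n + a := by
    ext e he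
    have h1 : (p.toSignedMeasure - n.toSignedMeasure) e
        = (a.toSignedMeasure - b.toSignedMeasure) e := by rw [hpn, hν]
    rw [VectorMeasure.sub_apply, VectorMeasure.sub_apply,
      Measure.toSignedMeasure_apply_measurable he, Measure.toSignedMeasure_apply_measurable he,
      Measure.toSignedMeasure_apply_measurable he,
      Measure.toSignedMeasure_apply_measurable he] at h1
    have h2 : ((p + b) e).toReal = ((n + a) e).toReal := by
      rw [Measure.add_apply, Measure.add_apply,
        ENNReal.toReal_add (measure_ne_top _ _) (measure_ne_top _ _),
        ENNReal.toReal_add (measure_ne_top _ _) (measure_ne_top _ _)]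
      simp only [measureReal_def] at h1
      linarith
    exact (ENNReal.toReal_eq_toReal_iff' (measure_ne_top _ _) (measure_ne_top _ _)).mp h2
  have hint : (∫ z, x z ∂p) + ∫ z, x z ∂b = (∫ z, x z ∂n) + ∫ z, x z ∂a := by
    rw [← integral_add_measure (aux_integrable x p) (aux_integrable x b),
      ← integral_add_measure (aux_integrable x n) (aux_integrable x a), key]
  show (∫ z, x z ∂p) - ∫ z, x z ∂n = _
  linarith

/-- `spair` of a finite (nonnegative) measure. -/
lemma aux_spair_toSignedMeasure (x : C(Ω, ℝ)) (m : Measure Ω) [IsFiniteMeasure m] :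
    spair (⇑x) m.toSignedMeasure = ∫ z, x z ∂m := by
  have h := aux_spair_sub x (a := m) (b := 0) (ν := m.toSignedMeasure) (by
    rw [Measure.toSignedMeasure_zero, sub_zero])
  simpa using h

lemma aux_spair_diracSM (x : C(Ω, ℝ)) (z : Ω) : spair (⇑x) (diracSM z) = x z := by
  rw [diracSM, aux_spair_toSignedMeasure, integral_dirac]

/-- Two finite Borel measures with equal integrals of continuous functions coincide. -/
lemma aux_measure_ext (a b : Measure Ω) [IsFiniteMeasure a] [IsFiniteMeasure b]
    (h : ∀ x : C(Ω, ℝ), (∫ z, x z ∂a) = ∫ z, x z ∂b) : a = b := by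
  apply ext_of_forall_lintegral_eq_of_IsFiniteMeasure
  intro f
  have hc : Continuous fun z => (f z : ℝ) := NNReal.continuous_coe.comp f.continuous
  have hx := h ⟨fun z => (f z : ℝ), hc⟩
  rw [lintegral_coe_eq_integral _ (aux_integrable ⟨_, hc⟩ a),
    lintegral_coe_eq_integral _ (aux_integrable ⟨_, hc⟩ b)]
  simp only [ContinuousMap.coe_mk] at hx
  rw [hx]

lemma aux_spair_injective :
    Function.Injective (fun ν : SignedMeasure Ω => fun x : C(Ω, ℝ) => spair (⇑x) ν) := by
  intro μ ν h
  set p1 := μ.toJordanDecomposition.posPart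
  set n1 := μ.toJordanDecomposition.negPart
  set p2 := ν.toJordanDecomposition.posPart
  set n2 := ν.toJordanDecomposition.negPart
  have hμpn : p1.toSignedMeasure - n1.toSignedMeasure = μ := by
    have := μ.toSignedMeasure_toJordanDecomposition
    rwa [JordanDecomposition.toSignedMeasure] at this
  have hνpn : p2.toSignedMeasure - n2.toSignedMeasure = ν := by
    have := ν.toSignedMeasure_toJordanDecomposition
    rwa [JordanDecomposition.toSignedMeasure] at this
  have h' : ∀ x : C(Ω, ℝ), (∫ z, x z ∂(p1 + n2)) = ∫ z, x z ∂(p2 + n1) := by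
    intro x
    have hx := congrFun h x
    have h1 : spair (⇑x) μ = (∫ z, x z ∂p1) - ∫ z, x z ∂n1 := aux_spair_sub x hμpn.symm
    have h2 : spair (⇑x) ν = (∫ z, x z ∂p2) - ∫ z, x z ∂n2 := aux_spair_sub x hνpn.symm
    simp only at hx
    rw [integral_add_measure (aux_integrable x p1) (aux_integrable x n2),
      integral_add_measure (aux_integrable x p2) (aux_integrable x n1)]
    linarith [h1 ▸ h2 ▸ hx]
  have hme : p1 + n2 = p2 + n1 := aux_measure_ext _ _ h'
  rw [← hμpn, ← hνpn]
  ext e he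
  have he1 := congrArg (fun m : Measure Ω => m e) hme
  simp only [Measure.add_apply] at he1
  have he2 : (p1 e).toReal + (n2 e).toReal = (p2 e).toReal + (n1 e).toReal := by
    rw [← ENNReal.toReal_add (measure_ne_top _ _) (measure_ne_top _ _),
      ← ENNReal.toReal_add (measure_ne_top _ _) (measure_ne_top _ _), he1]
  rw [VectorMeasure.sub_apply, VectorMeasure.sub_apply,
    Measure.toSignedMeasure_apply_measurable he, Measure.toSignedMeasure_apply_measurable he,
    Measure.toSignedMeasure_apply_measurable he, Measure.toSignedMeasure_apply_measurable he]
  simp only [measureReal_def]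
  linarith

instance aux_t2 : T2Space (SignedMeasure Ω) := by
  have hemb : Topology.IsEmbedding (fun ν : SignedMeasure Ω => fun x : C(Ω, ℝ) => spair (⇑x) ν) :=
    ⟨⟨rfl⟩, aux_spair_injective⟩
  exact hemb.t2Space

lemma aux_continuous_spair (x : C(Ω, ℝ)) :
    Continuous fun ν : SignedMeasure Ω => spair (⇑x) ν := by
  have h : Continuous fun ν : SignedMeasure Ω => fun y : C(Ω, ℝ) => spair (⇑y) ν :=
    continuous_induced_dom
  exact (continuous_apply x).comp h

lemma aux_continuous_diracSM : Continuous (diracSM : Ω → SignedMeasure Ω) := by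
  apply continuous_induced_rng.mpr
  apply continuous_pi
  intro x
  simp only [Function.comp]
  have : (fun z : Ω => spair (⇑x) (diracSM z)) = fun z => x z :=
    funext fun z => aux_spair_diracSM x z
  rw [this]
  exact x.continuous

lemma aux_diracSM_injective : Function.Injective (diracSM : Ω → SignedMeasure Ω) := by
  letI := TopologicalSpace.metrizableSpaceMetric Ω
  intro z w h
  have hx : ∀ x : C(Ω, ℝ), x z = x w := fun x => by
    rw [← aux_spair_diracSM x z, ← aux_spair_diracSM x w, h]
  have hd := hx ⟨fun y => dist y w, continuous_id.dist continuous_const⟩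
  simp only [ContinuousMap.coe_mk, dist_self] at hd
  exact dist_eq_zero.mp hd

noncomputable instance aux_msSM : MeasurableSpace (SignedMeasure Ω) := borel _

instance aux_bsSM : BorelSpace (SignedMeasure Ω) := ⟨rfl⟩

instance aux_bsFun : BorelSpace (SignedMeasure Ω → SignedMeasure Ω) := ⟨rfl⟩

lemma aux_me_diracSM : MeasurableEmbedding (diracSM : Ω → SignedMeasure Ω) :=
  (aux_continuous_diracSM.isClosedEmbedding aux_diracSM_injective).measurableEmbedding

lemma aux_toSignedMeasure_map (m : Measure Ω) [IsFiniteMeasure m] {f : Ω → Ω}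
    (hf : Measurable f) : m.toSignedMeasure.map f = (m.map f).toSignedMeasure := by
  ext e he
  rw [VectorMeasure.map_apply _ hf he, Measure.toSignedMeasure_apply_measurable (hf he),
    Measure.toSignedMeasure_apply_measurable he, measureReal_def, measureReal_def,
    Measure.map_apply hf he]

lemma aux_Vop_jordan {φ : Ω → Ω} (hφ : Continuous φ) (ν : SignedMeasure Ω) :
    Vop φ ν = (ν.toJordanDecomposition.posPart.map φ).toSignedMeasure
      - (ν.toJordanDecomposition.negPart.map φ).toSignedMeasure := by
  set p := ν.toJordanDecomposition.posPart with hp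
  set n := ν.toJordanDecomposition.negPart with hn
  have hpn : p.toSignedMeasure - n.toSignedMeasure = ν := by
    have := ν.toSignedMeasure_toJordanDecomposition
    rwa [JordanDecomposition.toSignedMeasure] at this
  ext e he
  have hL : Vop φ ν e = (p (φ ⁻¹' e)).toReal - (n (φ ⁻¹' e)).toReal := by
    show (ν.map φ) e = _
    rw [VectorMeasure.map_apply _ hφ.measurable he, ← hpn, VectorMeasure.sub_apply,
      Measure.toSignedMeasure_apply_measurable (hφ.measurable he),
      Measure.toSignedMeasure_apply_measurable (hφ.measurable he), measureReal_def,
      measureReal_def]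
  have hR : ((p.map φ).toSignedMeasure - (n.map φ).toSignedMeasure) e
      = (p (φ ⁻¹' e)).toReal - (n (φ ⁻¹' e)).toReal := by
    rw [VectorMeasure.sub_apply, Measure.toSignedMeasure_apply_measurable he,
      Measure.toSignedMeasure_apply_measurable he, measureReal_def, measureReal_def,
      Measure.map_apply hφ.measurable he,
      Measure.map_apply hφ.measurable he]
  exact hL.trans hR.symm

lemma aux_spair_Vop (x : C(Ω, ℝ)) {φ : Ω → Ω} (hφ : Continuous φ) (ν : SignedMeasure Ω) :
    spair (⇑x) (Vop φ ν) = spair (⇑(x.comp ⟨φ, hφ⟩)) ν := by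
  set p := ν.toJordanDecomposition.posPart with hp
  set n := ν.toJordanDecomposition.negPart with hn
  have hpn : p.toSignedMeasure - n.toSignedMeasure = ν := by
    have := ν.toSignedMeasure_toJordanDecomposition
    rwa [JordanDecomposition.toSignedMeasure] at this
  rw [aux_spair_sub x (aux_Vop_jordan hφ ν),
    integral_map hφ.aemeasurable x.continuous.aestronglyMeasurable,
    integral_map hφ.aemeasurable x.continuous.aestronglyMeasurable,
    aux_spair_sub (x.comp ⟨φ, hφ⟩) hpn.symm]
  rfl

lemma aux_Vop_diracSM {φ : Ω → Ω} (hφ : Continuous φ) (z : Ω) :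
    Vop φ (diracSM z) = diracSM (φ z) := by
  show (diracSM z).map φ = diracSM (φ z)
  ext e he
  rw [VectorMeasure.map_apply _ hφ.measurable he, diracSM, diracSM,
    Measure.toSignedMeasure_apply_measurable (hφ.measurable he),
    Measure.toSignedMeasure_apply_measurable he,
    measureReal_def, measureReal_def,
    ← Measure.map_apply hφ.measurable he, Measure.map_dirac' hφ.measurable]

lemma aux_Vop_iter {φ : Ω → Ω} (hφ : Continuous φ) (nn : ℕ) (z : Ω) :
    (Vop φ)^[nn] (diracSM z) = diracSM (φ^[nn] z) := by
  induction nn with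
  | zero => rfl
  | succ k ih =>
    rw [Function.iterate_succ_apply', Function.iterate_succ_apply', ih, aux_Vop_diracSM hφ]

lemma aux_continuous_Vop {φ : Ω → Ω} (hφ : Continuous φ) :
    Continuous (Vop φ : SignedMeasure Ω → SignedMeasure Ω) := by
  apply continuous_induced_rng.mpr
  apply continuous_pi
  intro x
  have h : (fun ν : SignedMeasure Ω => spair (⇑x) (Vop φ ν))
      = fun ν => spair (⇑(x.comp ⟨φ, hφ⟩)) ν := funext fun ν => aux_spair_Vop x hφ ν
  show Continuous fun ν : SignedMeasure Ω => spair (⇑x) (Vop φ ν)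
  rw [h]
  exact aux_continuous_spair _

lemma aux_continuous_comp {φ : Ω → Ω} (hφ : Continuous φ) :
    Continuous (fun T : SignedMeasure Ω → SignedMeasure Ω => Vop φ ∘ T) :=
  continuous_pi fun ν => (aux_continuous_Vop hφ).comp (continuous_apply ν)

lemma aux_F_maps_Gamma {φ : Ω → Ω} (hφ : Continuous φ)
    {P : SignedMeasure Ω → SignedMeasure Ω} (hP : P ∈ GammaSG φ) :
    Vop φ ∘ P ∈ GammaSG φ := by
  have h1 : (fun T : SignedMeasure Ω → SignedMeasure Ω => Vop φ ∘ T) ''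
      (Set.range fun n : ℕ => (Vop φ)^[n]) ⊆ Set.range fun n : ℕ => (Vop φ)^[n] := by
    rintro _ ⟨_, ⟨n, rfl⟩, rfl⟩
    exact ⟨n + 1, Function.iterate_succ' _ n⟩
  have h2 := image_closure_subset_closure_image (s := Set.range fun n : ℕ => (Vop φ)^[n])
    (aux_continuous_comp hφ)
  have h3 : Vop φ ∘ P ∈ closure ((fun T : SignedMeasure Ω → SignedMeasure Ω => Vop φ ∘ T) ''
      (Set.range fun n : ℕ => (Vop φ)^[n])) :=
    h2 (Set.mem_image_of_mem _ hP)
  exact closure_mono h1 h3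

lemma aux_mem_range_dirac {φ : Ω → Ω} (hφ : Continuous φ) (ω : Ω)
    {P : SignedMeasure Ω → SignedMeasure Ω} (hP : P ∈ GammaSG φ) :
    ∃ z : Ω, diracSM z = P (diracSM ω) := by
  have hcl : IsClosed (Set.range (diracSM : Ω → SignedMeasure Ω)) :=
    (aux_continuous_diracSM.isClosedEmbedding aux_diracSM_injective).isClosed_range
  have hsub : GammaSG φ ⊆
      (fun P : SignedMeasure Ω → SignedMeasure Ω => P (diracSM ω)) ⁻¹' Set.range diracSM := by
    apply closure_minimal
    · rintro _ ⟨n, rfl⟩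
      exact ⟨φ^[n] ω, (aux_Vop_iter hφ n ω).symm⟩
    · exact hcl.preimage (continuous_apply (diracSM ω) :
        Continuous fun P : SignedMeasure Ω → SignedMeasure Ω => P (diracSM ω))
  obtain ⟨z, hz⟩ := hsub hP
  exact ⟨z, hz⟩

open Classical in
/-- The point such that `ν = δ(z)`, when it exists (else the default point `ω`). -/
noncomputable def zpt (ω : Ω) (ν : SignedMeasure Ω) : Ω :=
  if h : ∃ z : Ω, diracSM z = ν then h.choose else ω

lemma zpt_diracSM (ω z : Ω) : zpt ω (diracSM z) = z := by
  have h : ∃ w : Ω, diracSM w = diracSM z := ⟨z, rfl⟩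
  rw [zpt, dif_pos h]
  exact aux_diracSM_injective h.choose_spec

lemma aux_measurable_zpt (ω : Ω) : Measurable (zpt ω : SignedMeasure Ω → Ω) := by
  intro e he
  have hset : zpt ω ⁻¹' e = (diracSM '' e) ∪
      ((Set.range (diracSM : Ω → SignedMeasure Ω))ᶜ ∩ {ν : SignedMeasure Ω | ω ∈ e}) := by
    ext ν
    by_cases h : ∃ z : Ω, diracSM z = ν
    · obtain ⟨z, rfl⟩ := h
      simp only [Set.mem_preimage, zpt_diracSM, Set.mem_union, Set.mem_image,
        Set.mem_inter_iff, Set.mem_compl_iff, Set.mem_range, Set.mem_setOf_eq]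
      constructor
      · intro hz
        exact Or.inl ⟨z, hz, rfl⟩
      · rintro (⟨w, hw, hwe⟩ | ⟨hnr, _⟩)
        · exact (aux_diracSM_injective hwe) ▸ hw
        · exact absurd ⟨z, rfl⟩ hnr
    · have hz : zpt ω ν = ω := by rw [zpt, dif_neg h]
      simp only [Set.mem_preimage, hz, Set.mem_union, Set.mem_image,
        Set.mem_inter_iff, Set.mem_compl_iff, Set.mem_range, Set.mem_setOf_eq]
      constructor
      · intro hω
        exact Or.inr ⟨fun ⟨z, hz'⟩ => h ⟨z, hz'⟩, hω⟩
      · rintro (⟨w, hw, hwe⟩ | ⟨_, hω⟩)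
        · exact absurd ⟨w, hwe⟩ h
        · exact hω
  rw [hset]
  apply MeasurableSet.union (aux_me_diracSM.measurableSet_image' he)
  apply MeasurableSet.inter
  · exact ((aux_continuous_diracSM.isClosedEmbedding
      aux_diracSM_injective).isClosed_range).measurableSet.compl
  · by_cases hω : ω ∈ e
    · have : {ν : SignedMeasure Ω | ω ∈ e} = Set.univ := by ext ν; simp [hω]
      rw [this]; exact MeasurableSet.univ
    · have : {ν : SignedMeasure Ω | ω ∈ e} = ∅ := by ext ν; simp [hω]
      rw [this]; exact MeasurableSet.empty

end AuxLemmas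

/-- Lemma 1.10: if `λ` is a Borel probability measure on `Γ(Ω,φ)` that is ergodic with
respect to `P ↦ V ∘ P`, `ω ∈ Ω`, and `μ` is the Borel probability measure with
`∫ x dμ = ∫_Γ ⟨x, Pδ(ω)⟩ dλ(P)` for all continuous `x`, then `μ` is `φ`-invariant
and `φ`-ergodic. -/
theorem stmt_5 (φ : Ω → Ω) (hφ : Continuous φ)
    (lam : Measure (SignedMeasure Ω → SignedMeasure Ω)) (hprob : IsProbabilityMeasure lam)
    (hconc : lam (GammaSG φ)ᶜ = 0)
    (hinv : lam.map (fun T => Vop φ ∘ T) = lam)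
    (herg : ∀ h : Set (SignedMeasure Ω → SignedMeasure Ω), MeasurableSet h →
      h ⊆ GammaSG φ → {P ∈ GammaSG φ | Vop φ ∘ P ∈ h} = h → lam h = 0 ∨ lam h = 1)
    (ω : Ω) (μ : Measure Ω) [IsProbabilityMeasure μ]
    (hμ : ∀ x : C(Ω, ℝ), (∫ ζ, x ζ ∂μ) = ∫ P, spair (⇑x) (P (diracSM ω)) ∂lam) :
    (∀ e : Set Ω, MeasurableSet e → μ (φ ⁻¹' e) = μ e) ∧
    (∀ e : Set Ω, MeasurableSet e → φ ⁻¹' e = e → μ e = 0 ∨ μ e = 1) := by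
  classical
  set F : (SignedMeasure Ω → SignedMeasure Ω) → (SignedMeasure Ω → SignedMeasure Ω) :=
    fun T => Vop φ ∘ T with hF
  set g : (SignedMeasure Ω → SignedMeasure Ω) → Ω := fun P => zpt ω (P (diracSM ω)) with hg
  have heval : Measurable fun P : SignedMeasure Ω → SignedMeasure Ω => P (diracSM ω) :=
    (continuous_apply (diracSM ω) :
      Continuous fun P : SignedMeasure Ω → SignedMeasure Ω => P (diracSM ω)).measurable
  have hgm : Measurable g := (aux_measurable_zpt ω).comp heval
  have hFc : Continuous F := by rw [hF]; exact aux_continuous_comp hφ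
  have hGae : ∀ᵐ P ∂lam, P ∈ GammaSG φ := by
    rw [MeasureTheory.ae_iff]
    exact hconc
  have hgP : ∀ P ∈ GammaSG φ, diracSM (g P) = P (diracSM ω) := by
    intro P hP
    obtain ⟨z, hz⟩ := aux_mem_range_dirac hφ ω hP
    show diracSM (zpt ω (P (diracSM ω))) = P (diracSM ω)
    rw [← hz, zpt_diracSM]
  have hgF : ∀ P ∈ GammaSG φ, g (F P) = φ (g P) := by
    intro P hP
    obtain ⟨z, hz⟩ := aux_mem_range_dirac hφ ω hP
    have h1 : (F P) (diracSM ω) = diracSM (φ z) := by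
      show Vop φ (P (diracSM ω)) = _
      rw [← hz, aux_Vop_diracSM hφ]
    have h2 : g P = z := by
      show zpt ω (P (diracSM ω)) = z
      rw [← hz, zpt_diracSM]
    show zpt ω ((F P) (diracSM ω)) = φ (g P)
    rw [h1, zpt_diracSM, h2]
  haveI : IsProbabilityMeasure (lam.map g) := Measure.isProbabilityMeasure_map hgm.aemeasurable
  have hμeq : μ = lam.map g := by
    apply aux_measure_ext
    intro x
    rw [integral_map hgm.aemeasurable x.continuous.aestronglyMeasurable, hμ x]
    apply integral_congr_ae
    filter_upwards [hGae] with P hP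
    rw [← hgP P hP, aux_spair_diracSM]
  have hcongr : ∀ A B : Set (SignedMeasure Ω → SignedMeasure Ω),
      A ∩ GammaSG φ = B ∩ GammaSG φ → lam A = lam B := by
    intro A B hAB
    apply measure_congr
    apply Filter.eventuallyEq_set.mpr
    filter_upwards [hGae] with P hP
    constructor
    · intro hA
      have hPB : P ∈ B ∩ GammaSG φ := by rw [← hAB]; exact Set.mem_inter hA hP
      exact hPB.1
    · intro hB
      have hPA : P ∈ A ∩ GammaSG φ := by rw [hAB]; exact Set.mem_inter hB hP
      exact hPA.1
  constructor
  · -- invariance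
    intro e he
    rw [hμeq, Measure.map_apply hgm (hφ.measurable he), Measure.map_apply hgm he]
    have hset : (g ⁻¹' (φ ⁻¹' e)) ∩ GammaSG φ = (F ⁻¹' (g ⁻¹' e)) ∩ GammaSG φ := by
      ext P
      simp only [Set.mem_inter_iff, Set.mem_preimage]
      constructor
      · rintro ⟨h1, hP⟩
        exact ⟨by rw [hgF P hP]; exact h1, hP⟩
      · rintro ⟨h1, hP⟩
        refine ⟨?_, hP⟩
        rwa [hgF P hP] at h1
    calc lam (g ⁻¹' (φ ⁻¹' e)) = lam (F ⁻¹' (g ⁻¹' e)) := hcongr _ _ hset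
      _ = (lam.map F) (g ⁻¹' e) := (Measure.map_apply hFc.measurable (hgm he)).symm
      _ = lam (g ⁻¹' e) := by rw [hinv]
  · -- ergodicity
    intro e he hei
    set h : Set (SignedMeasure Ω → SignedMeasure Ω) := GammaSG φ ∩
      ((fun P : SignedMeasure Ω → SignedMeasure Ω => P (diracSM ω)) ⁻¹' (diracSM '' e))
      with hh
    have hhm : MeasurableSet h := by
      apply MeasurableSet.inter
      · exact (isClosed_closure : IsClosed (GammaSG φ)).measurableSet
      · exact heval (aux_me_diracSM.measurableSet_image' he)
    have hinv2 : {P ∈ GammaSG φ | Vop φ ∘ P ∈ h} = h := by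
      ext P
      simp only [hh, Set.mem_setOf_eq, Set.mem_inter_iff, Set.mem_preimage]
      constructor
      · rintro ⟨hP, _, hmem⟩
        refine ⟨hP, ?_⟩
        obtain ⟨z, hz⟩ := aux_mem_range_dirac hφ ω hP
        have h1 : (Vop φ ∘ P) (diracSM ω) = diracSM (φ z) := by
          show Vop φ (P (diracSM ω)) = _
          rw [← hz, aux_Vop_diracSM hφ]
        rw [h1] at hmem
        obtain ⟨w, hw, hwe⟩ := hmem
        have hwz : w = φ z := aux_diracSM_injective hwe
        have hze : z ∈ e := by
          rw [← hei]
          show φ z ∈ e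
          rw [← hwz]; exact hw
        exact ⟨z, hze, hz⟩
      · rintro ⟨hP, hmem⟩
        refine ⟨hP, aux_F_maps_Gamma hφ hP, ?_⟩
        obtain ⟨w, hw, hwe⟩ := hmem
        have h1 : (Vop φ ∘ P) (diracSM ω) = diracSM (φ w) := by
          show Vop φ (P (diracSM ω)) = _
          rw [← hwe, aux_Vop_diracSM hφ]
        refine ⟨φ w, ?_, h1.symm⟩
        have : w ∈ φ ⁻¹' e := by rw [hei]; exact hw
        exact this
    have hval := herg h hhm Set.inter_subset_left hinv2
    have hμh : μ e = lam h := by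
      rw [hμeq, Measure.map_apply hgm he]
      apply hcongr
      ext P
      simp only [hh, Set.mem_inter_iff, Set.mem_preimage]
      constructor
      · rintro ⟨hge, hP⟩
        exact ⟨⟨hP, ⟨g P, hge, hgP P hP⟩⟩, hP⟩
      · rintro ⟨⟨hP, hmem⟩, _⟩
        refine ⟨?_, ‹P ∈ GammaSG φ›⟩
        obtain ⟨w, hw, hwe⟩ := hmem
        have hgw : g P = w := aux_diracSM_injective ((hgP P hP).trans hwe.symm)
        show g P ∈ e
        rw [hgw]; exact hw
    rw [hμh]
    exact hval
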